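/- Let (T_α, ℏ_α) be a C^k-convergent matrix regularization and suppose f̂_α, ĥ_α are sequences C^k-converging to f and h. Then f̂_α ĥ_α C^k-converges to fh. (Proved by induction on k using the Leibniz rule ∂̂^{g}(f̂ĥ) = (∂̂^{g}f̂)ĥ + f̂(∂̂^{g}ĥ) for the derivation ∂̂^g(X) = (iℏ)^{-1}[X, T_α(g)].) -/
import Mathlib


open scoped BigOperators Topology Matrix

/-- The operator norm of a complex `N × N` matrix (acting on `ℓ²`). -/
noncomputable def opn {N : ℕ} (M : Matrix (Fin N) (Fin N) ℂ) : ℝ :=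
  ‖(Matrix.toEuclideanCLM (𝕜 := ℂ) M :
      EuclideanSpace ℂ (Fin N) →L[ℂ] EuclideanSpace ℂ (Fin N))‖

/-- The iterated rescaled commutator
`∂̂^{A₁⋯A_l}(X) = (iℏ)⁻¹[∂̂^{A₂⋯A_l}(X), A₁]`. -/
noncomputable def matD {N : ℕ} (hb : ℝ) :
    List (Matrix (Fin N) (Fin N) ℂ) → Matrix (Fin N) (Fin N) ℂ →
      Matrix (Fin N) (Fin N) ℂ
  | [], X => X
  | A :: rest, X =>
      ((Complex.I * (hb : ℂ))⁻¹) • (matD hb rest X * A - A * matD hb rest X)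

/-- The iterated Poisson bracket `∂^{f₁⋯f_l}(h) = {f₁, ∂^{f₂⋯f_l}(h)}`. -/
def pbIter {F : Type*} (pb : F → F → F) : List F → F → F
  | [], h => h
  | g :: rest, h => pb g (pbIter pb rest h)

-- opn basic lemmas
lemma opn_nonneg {N : ℕ} (M : Matrix (Fin N) (Fin N) ℂ) : 0 ≤ opn M := norm_nonneg _

lemma opn_add_le {N : ℕ} (A B : Matrix (Fin N) (Fin N) ℂ) :
    opn (A + B) ≤ opn A + opn B := by
  unfold opn; rw [map_add]; exact norm_add_le _ _

lemma opn_mul_le {N : ℕ} (A B : Matrix (Fin N) (Fin N) ℂ) :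
    opn (A * B) ≤ opn A * opn B := by
  unfold opn; rw [map_mul]; exact norm_mul_le _ _

lemma opn_neg {N : ℕ} (A : Matrix (Fin N) (Fin N) ℂ) : opn (-A) = opn A := by
  unfold opn; rw [map_neg, norm_neg]

-- matD basic lemmas
lemma matD_nil {N : ℕ} (hb : ℝ) (X : Matrix (Fin N) (Fin N) ℂ) : matD hb [] X = X := rfl

lemma matD_cons {N : ℕ} (hb : ℝ) (A : Matrix (Fin N) (Fin N) ℂ) (w : List _) (X) :
    matD hb (A :: w) X =
      ((Complex.I * (hb : ℂ))⁻¹) • (matD hb w X * A - A * matD hb w X) := rfl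

lemma matD_add {N : ℕ} (hb : ℝ) (w : List (Matrix (Fin N) (Fin N) ℂ))
    (X Y : Matrix (Fin N) (Fin N) ℂ) :
    matD hb w (X + Y) = matD hb w X + matD hb w Y := by
  induction w with
  | nil => rfl
  | cons A rest ih =>
      simp only [matD_cons, ih, add_mul, mul_add, ← smul_add]
      congr 1
      abel

lemma matD_append_single {N : ℕ} (hb : ℝ) (u : List (Matrix (Fin N) (Fin N) ℂ))
    (A X : Matrix (Fin N) (Fin N) ℂ) :
    matD hb (u ++ [A]) X = matD hb u (matD hb [A] X) := by
  induction u with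
  | nil => rfl
  | cons B u ih => simp only [List.cons_append, matD_cons, ih]

lemma matD_single_mul {N : ℕ} (hb : ℝ) (A X Y : Matrix (Fin N) (Fin N) ℂ) :
    matD hb [A] (X * Y) = matD hb [A] X * Y + X * matD hb [A] Y := by
  simp only [matD_cons, matD_nil, smul_mul_assoc, mul_smul_comm, ← smul_add]
  congr 1
  noncomm_ring

lemma pbIter_append_single {F : Type*} (pb : F → F → F) (u : List F) (A x : F) :
    pbIter pb (u ++ [A]) x = pbIter pb u (pb A x) := by
  induction u with
  | nil => rfl
  | cons B u ih => simp only [List.cons_append, pbIter, List.append_eq, ih]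

-- tendsto helpers (dependent sequences of matrices)
lemma tendsto_opn_add {Nseq : ℕ → ℕ}
    {X Y : ∀ α, Matrix (Fin (Nseq α)) (Fin (Nseq α)) ℂ}
    (hX : Filter.Tendsto (fun α => opn (X α)) Filter.atTop (𝓝 0))
    (hY : Filter.Tendsto (fun α => opn (Y α)) Filter.atTop (𝓝 0)) :
    Filter.Tendsto (fun α => opn (X α + Y α)) Filter.atTop (𝓝 0) := by
  refine squeeze_zero (fun α => opn_nonneg _) (fun α => opn_add_le _ _) ?_
  simpa using hX.add hY

lemma tendsto_opn_mul {Nseq : ℕ → ℕ}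
    {a b a' b' : ∀ α, Matrix (Fin (Nseq α)) (Fin (Nseq α)) ℂ}
    {Ca Cb : ℝ}
    (hCa : ∀ α, opn (a' α) ≤ Ca) (hCb : ∀ α, opn (b' α) ≤ Cb)
    (ha : Filter.Tendsto (fun α => opn (a α - a' α)) Filter.atTop (𝓝 0))
    (hb : Filter.Tendsto (fun α => opn (b α - b' α)) Filter.atTop (𝓝 0)) :
    Filter.Tendsto (fun α => opn (a α * b α - a' α * b' α)) Filter.atTop (𝓝 0) := by
  have key : ∀ α, a α * b α - a' α * b' α =
      (a α - a' α) * (b α - b' α) + (a α - a' α) * b' α + a' α * (b α - b' α) := by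
    intro α; noncomm_ring
  refine squeeze_zero (g := fun α =>
      opn (a α - a' α) * opn (b α - b' α) + opn (a α - a' α) * Cb + Ca * opn (b α - b' α))
    (fun α => opn_nonneg _) ?_ ?_
  · intro α
    rw [key α]
    refine le_trans (opn_add_le _ _) (add_le_add (le_trans (opn_add_le _ _)
      (add_le_add (opn_mul_le _ _) ?_)) ?_)
    · exact le_trans (opn_mul_le _ _)
        (mul_le_mul_of_nonneg_left (hCb α) (opn_nonneg _))
    · exact le_trans (opn_mul_le _ _)
        (mul_le_mul_of_nonneg_right (hCa α) (opn_nonneg _))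
  · have := ((ha.mul hb).add (ha.mul_const Cb)).add ((hb.const_mul Ca))
    simpa using this

section MainAux

variable {F : Type*} [CommRing F] [Algebra ℝ F]
  (pb : F → F → F)
  (Nseq : ℕ → ℕ) (ℏ : ℕ → ℝ)
  (T : ∀ α : ℕ, F →ₗ[ℝ] Matrix (Fin (Nseq α)) (Fin (Nseq α)) ℂ)

lemma T_add_approx (k : ℕ)
    (hreg : ∀ g : F, ∀ w : List F, w.length ≤ k →
      Filter.Tendsto
        (fun α => opn (matD (ℏ α) (w.map (fun v => T α v)) (T α g) -
          T α (pbIter pb w g)))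
        Filter.atTop (𝓝 0))
    (u : List F) (hu : u.length ≤ k) (x y : F) :
    Filter.Tendsto
      (fun α => opn (T α (pbIter pb u (x + y)) - T α (pbIter pb u x) -
        T α (pbIter pb u y)))
      Filter.atTop (𝓝 0) := by
  have key : ∀ α, T α (pbIter pb u (x + y)) - T α (pbIter pb u x) - T α (pbIter pb u y)
      = -(matD (ℏ α) (u.map (fun v => T α v)) (T α (x + y)) - T α (pbIter pb u (x + y)))
        + (matD (ℏ α) (u.map (fun v => T α v)) (T α x) - T α (pbIter pb u x))
        + (matD (ℏ α) (u.map (fun v => T α v)) (T α y) - T α (pbIter pb u y)) := by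
    intro α
    rw [map_add, matD_add]
    abel
  simp only [key]
  exact tendsto_opn_add
    (tendsto_opn_add (by simpa only [opn_neg] using hreg (x + y) u hu) (hreg x u hu))
    (hreg y u hu)

lemma main_aux
    (hleib : ∀ g a b : F, pb g (a * b) = pb g a * b + a * pb g b)
    (hbound : ∀ g : F, ∃ C : ℝ, ∀ α, opn (T α g) ≤ C)
    (hprod : ∀ g g' : F,
      Filter.Tendsto (fun α => opn (T α (g * g') - T α g * T α g'))
        Filter.atTop (𝓝 0))
    (k : ℕ)
    (hreg : ∀ g : F, ∀ w : List F, w.length ≤ k →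
      Filter.Tendsto
        (fun α => opn (matD (ℏ α) (w.map (fun v => T α v)) (T α g) -
          T α (pbIter pb w g)))
        Filter.atTop (𝓝 0)) :
    ∀ n : ℕ, ∀ w : List F, w.length = n → w.length ≤ k →
    ∀ f h : F, ∀ fh hh : ∀ α, Matrix (Fin (Nseq α)) (Fin (Nseq α)) ℂ,
    Filter.Tendsto (fun α => opn (fh α - T α f)) Filter.atTop (𝓝 0) →
    Filter.Tendsto (fun α => opn (hh α - T α h)) Filter.atTop (𝓝 0) →
    (∀ v : List F, 1 ≤ v.length → v.length ≤ n →
      Filter.Tendsto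
        (fun α => opn (matD (ℏ α) (v.map (fun g => T α g)) (fh α) -
          T α (pbIter pb v f)))
        Filter.atTop (𝓝 0)) →
    (∀ v : List F, 1 ≤ v.length → v.length ≤ n →
      Filter.Tendsto
        (fun α => opn (matD (ℏ α) (v.map (fun g => T α g)) (hh α) -
          T α (pbIter pb v h)))
        Filter.atTop (𝓝 0)) →
    Filter.Tendsto
      (fun α => opn (matD (ℏ α) (w.map (fun g => T α g)) (fh α * hh α) -
        T α (pbIter pb w (f * h))))
      Filter.atTop (𝓝 0) := by
  intro n
  induction n with
  | zero =>
    intro w hw _ f h fh hh hf0 hh0 _ _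
    have hwnil : w = [] := List.eq_nil_of_length_eq_zero hw
    subst hwnil
    obtain ⟨Cf, hCf⟩ := hbound f
    obtain ⟨Ch, hCh⟩ := hbound h
    have h1 := tendsto_opn_mul hCf hCh hf0 hh0
    have key : ∀ α, matD (ℏ α) (List.map (fun g => T α g) []) (fh α * hh α) -
        T α (pbIter pb [] (f * h))
        = (fh α * hh α - T α f * T α h) + -(T α (f * h) - T α f * T α h) := by
      intro α
      simp only [List.map_nil, matD_nil, pbIter]
      abel
    simp only [key]
    exact tendsto_opn_add h1 (by simpa only [opn_neg] using hprod f h)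
  | succ n ih =>
    intro w hw hwk f h fh hh hf0 hh0 hfk hhk
    rcases w.eq_nil_or_concat with rfl | ⟨u, A, rfl⟩
    · simp at hw
    have hul : u.length = n := by simp at hw; omega
    have huk : u.length ≤ k := by simp at hwk; omega
    -- the two differentiated sequences
    have C1 : Filter.Tendsto
        (fun α => opn (matD (ℏ α) (u.map (fun g => T α g))
            ((matD (ℏ α) [T α A] (fh α)) * hh α) -
          T α (pbIter pb u (pb A f * h))))
        Filter.atTop (𝓝 0) := by
      refine ih u hul huk (pb A f) h (fun α => matD (ℏ α) [T α A] (fh α)) hh ?_ hh0 ?_ ?_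
      · simpa [pbIter] using hfk [A] (by simp) (by simp)
      · intro v hv1 hv2
        have := hfk (v ++ [A]) (by simp) (by simp; omega)
        simpa only [List.map_append, List.map_cons, List.map_nil,
          matD_append_single, pbIter_append_single] using this
      · intro v hv1 hv2
        exact hhk v hv1 (by omega)
    have C2 : Filter.Tendsto
        (fun α => opn (matD (ℏ α) (u.map (fun g => T α g))
            (fh α * (matD (ℏ α) [T α A] (hh α))) -
          T α (pbIter pb u (f * pb A h))))
        Filter.atTop (𝓝 0) := by
      refine ih u hul huk f (pb A h) fh (fun α => matD (ℏ α) [T α A] (hh α)) hf0 ?_ ?_ ?_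
      · simpa [pbIter] using hhk [A] (by simp) (by simp)
      · intro v hv1 hv2
        exact hfk v hv1 (by omega)
      · intro v hv1 hv2
        have := hhk (v ++ [A]) (by simp) (by simp; omega)
        simpa only [List.map_append, List.map_cons, List.map_nil,
          matD_append_single, pbIter_append_single] using this
    have C3 := T_add_approx pb Nseq ℏ T k hreg u huk (pb A f * h) (f * pb A h)
    have C3' : Filter.Tendsto
        (fun α => opn (-(T α (pbIter pb u (pb A f * h + f * pb A h)) -
          T α (pbIter pb u (pb A f * h)) - T α (pbIter pb u (f * pb A h)))))
        Filter.atTop (𝓝 0) := by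
      simpa only [opn_neg] using C3
    refine (tendsto_opn_add (tendsto_opn_add C1 C2) C3').congr ?_
    intro α
    congr 1
    rw [List.concat_eq_append, List.map_append, List.map_cons, List.map_nil,
      matD_append_single, matD_single_mul, matD_add, pbIter_append_single, hleib]
    abel

end MainAux

/-- In a `C^k`-convergent matrix regularization, if `f̂_α` and `ĥ_α`
`C^k`-converge to `f` and `h`, then `f̂_α ĥ_α` `C^k`-converges to `fh`. -/
theorem product_sequence_Ck_converges
    {F : Type*} [CommRing F] [Algebra ℝ F]
    (pb : F → F → F)
    (hleib : ∀ g a b : F, pb g (a * b) = pb g a * b + a * pb g b)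
    (Nseq : ℕ → ℕ) (hmono : StrictMono Nseq) (hpos : ∀ α, 0 < Nseq α)
    (ℏ : ℕ → ℝ) (hℏpos : ∀ α, 0 < ℏ α)
    (T : ∀ α : ℕ, F →ₗ[ℝ] Matrix (Fin (Nseq α)) (Fin (Nseq α)) ℂ)
    (hherm : ∀ α (g : F), (T α g).IsHermitian)
    (hbound : ∀ g : F, ∃ C : ℝ, ∀ α, opn (T α g) ≤ C)
    (hprod : ∀ g g' : F,
      Filter.Tendsto (fun α => opn (T α (g * g') - T α g * T α g'))
        Filter.atTop (𝓝 0))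
    (k : ℕ)
    (hreg : ∀ g : F, ∀ w : List F, w.length ≤ k →
      Filter.Tendsto
        (fun α => opn (matD (ℏ α) (w.map (fun v => T α v)) (T α g) -
          T α (pbIter pb w g)))
        Filter.atTop (𝓝 0))
    (f h : F)
    (fh hh : ∀ α, Matrix (Fin (Nseq α)) (Fin (Nseq α)) ℂ)
    (hf0 : Filter.Tendsto (fun α => opn (fh α - T α f)) Filter.atTop (𝓝 0))
    (hh0 : Filter.Tendsto (fun α => opn (hh α - T α h)) Filter.atTop (𝓝 0))
    (hfk : ∀ w : List F, 1 ≤ w.length → w.length ≤ k →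
      Filter.Tendsto
        (fun α => opn (matD (ℏ α) (w.map (fun v => T α v)) (fh α) -
          T α (pbIter pb w f)))
        Filter.atTop (𝓝 0))
    (hhk : ∀ w : List F, 1 ≤ w.length → w.length ≤ k →
      Filter.Tendsto
        (fun α => opn (matD (ℏ α) (w.map (fun v => T α v)) (hh α) -
          T α (pbIter pb w h)))
        Filter.atTop (𝓝 0)) :
    (Filter.Tendsto (fun α => opn (fh α * hh α - T α (f * h)))
        Filter.atTop (𝓝 0)) ∧
    (∀ w : List F, 1 ≤ w.length → w.length ≤ k →
      Filter.Tendsto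
        (fun α => opn (matD (ℏ α) (w.map (fun v => T α v)) (fh α * hh α) -
          T α (pbIter pb w (f * h))))
        Filter.atTop (𝓝 0)) := by
  constructor
  · have := main_aux pb Nseq ℏ T hleib hbound hprod k hreg 0 [] rfl (Nat.zero_le k)
      f h fh hh hf0 hh0
      (fun v h1 h2 => absurd (h1.trans h2) (by omega))
      (fun v h1 h2 => absurd (h1.trans h2) (by omega))
    simpa only [List.map_nil, matD_nil, pbIter] using this
  · intro w h1 hk
    exact main_aux pb Nseq ℏ T hleib hbound hprod k hreg w.length w rfl hk
      f h fh hh hf0 hh0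
      (fun v a b => hfk v a (b.trans hk))
      (fun v a b => hhk v a (b.trans hk))
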